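/- Mutual exclusion for the set-based ticket protocol: consider the system with a global set bag ⊆ ℤ and counter avail : ℤ, where thread a taking transition τ₃ sets ticket(a) := avail, adds avail to bag, and increments avail; transition τ₄ (entering the critical section) is guarded by ticket(a) = min(bag); and τ₆ (leaving) removes ticket(a) from bag. Then in every reachable state: (1) if pc(t) ∈ {4,5,6} then ticket(t) < avail and ticket(t) ∈ bag; (2) distinct active threads hold distinct tickets; (3) if pc(t) ∈ {5,6} then ticket(t) is the minimum of bag; and consequently no two distinct threads are simultaneously in the critical section (pc ∈ {5,6}). -/
import Mathlib


/-- Global state of the set-based ticket protocol. -/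
structure SState (T : Type*) where
  avail : ℤ
  bag : Finset ℤ
  pc : T → Fin 8
  ticket : T → ℤ

/-- Initial condition: counter 0, empty bag, every thread at location 1 with ticket 0. -/
def SInit {T : Type*} (s : SState T) : Prop :=
  s.avail = 0 ∧ s.bag = ∅ ∧ (∀ t, s.pc t = 1) ∧ (∀ t, s.ticket t = 0)

/-- The transitions of thread `a` in the set-based ticket protocol. -/
def SStep {T : Type*} [DecidableEq T] (a : T) (s s' : SState T) : Prop :=
  -- τ₁ : 1 → 2
  (s.pc a = 1 ∧ s'.pc = Function.update s.pc a 2 ∧ s'.ticket = s.ticket ∧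
    s'.avail = s.avail ∧ s'.bag = s.bag) ∨
  -- τ₂ : 2 → 3
  (s.pc a = 2 ∧ s'.pc = Function.update s.pc a 3 ∧ s'.ticket = s.ticket ∧
    s'.avail = s.avail ∧ s'.bag = s.bag) ∨
  -- τ₃ : 3 → 4, takes a fresh ticket and announces it in the bag
  (s.pc a = 3 ∧ s'.pc = Function.update s.pc a 4 ∧
    s'.ticket = Function.update s.ticket a s.avail ∧
    s'.avail = s.avail + 1 ∧ s'.bag = insert s.avail s.bag) ∨
  -- τ₄ : 4 → 5, guarded by bag ≠ ∅ and ticket(a) = min(bag)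
  (s.pc a = 4 ∧ s.bag.Nonempty ∧ s.bag.min = (s.ticket a : WithBot ℤ) ∧
    s'.pc = Function.update s.pc a 5 ∧ s'.ticket = s.ticket ∧
    s'.avail = s.avail ∧ s'.bag = s.bag) ∨
  -- τ₅ : 5 → 6
  (s.pc a = 5 ∧ s'.pc = Function.update s.pc a 6 ∧ s'.ticket = s.ticket ∧
    s'.avail = s.avail ∧ s'.bag = s.bag) ∨
  -- τ₆ : 6 → 7, removes the ticket from the bag
  (s.pc a = 6 ∧ s'.pc = Function.update s.pc a 7 ∧ s'.ticket = s.ticket ∧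
    s'.avail = s.avail ∧ s'.bag = s.bag.erase (s.ticket a)) ∨
  -- τ₇ : 7 → 1
  (s.pc a = 7 ∧ s'.pc = Function.update s.pc a 1 ∧ s'.ticket = s.ticket ∧
    s'.avail = s.avail ∧ s'.bag = s.bag)

/-- A state is reachable if obtained from an initial state by finitely many transitions. -/
def SReachable {T : Type*} [DecidableEq T] (s : SState T) : Prop :=
  ∃ s₀, SInit s₀ ∧ Relation.ReflTransGen (fun u v => ∃ a, SStep a u v) s₀ s

def SInv {T : Type*} [DecidableEq T] (s : SState T) : Prop :=
  (∀ x ∈ s.bag, x < s.avail) ∧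
  (∀ t, (s.pc t = 4 ∨ s.pc t = 5 ∨ s.pc t = 6) →
      s.ticket t < s.avail ∧ s.ticket t ∈ s.bag) ∧
  (∀ t t', t ≠ t' → (s.pc t = 4 ∨ s.pc t = 5 ∨ s.pc t = 6) →
      (s.pc t' = 4 ∨ s.pc t' = 5 ∨ s.pc t' = 6) → s.ticket t ≠ s.ticket t') ∧
  (∀ t, (s.pc t = 5 ∨ s.pc t = 6) → s.bag.min = (s.ticket t : WithBot ℤ))

theorem SInv_mutex {T : Type*} [DecidableEq T] {s : SState T} (h : SInv s) :
    ∀ t t', t ≠ t' → ¬ ((s.pc t = 5 ∨ s.pc t = 6) ∧ (s.pc t' = 5 ∨ s.pc t' = 6)) := by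
  rintro t t' hne ⟨h1, h2⟩
  obtain ⟨-, -, hdist, hmin⟩ := h
  have heq : s.ticket t = s.ticket t' :=
    WithBot.coe_inj.mp ((hmin t h1).symm.trans (hmin t' h2))
  exact hdist t t' hne (Or.inr h1) (Or.inr h2) heq

theorem SInv_step {T : Type*} [DecidableEq T] {a : T} {s s' : SState T}
    (hs : SStep a s s') (h : SInv s) : SInv s' := by
  obtain ⟨hbag, hact, hdist, hmin⟩ := h
  have hmut := SInv_mutex ⟨hbag, hact, hdist, hmin⟩
  rcases hs with ⟨hpc, hpc', ht', hav', hb'⟩ | ⟨hpc, hpc', ht', hav', hb'⟩ |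
      ⟨hpc, hpc', ht', hav', hb'⟩ | ⟨hpc, hne, hg, hpc', ht', hav', hb'⟩ |
      ⟨hpc, hpc', ht', hav', hb'⟩ | ⟨hpc, hpc', ht', hav', hb'⟩ |
      ⟨hpc, hpc', ht', hav', hb'⟩
  -- τ₁ : 1 → 2
  · refine ⟨by rw [hb', hav']; exact hbag, ?_, ?_, ?_⟩
    · intro t ht
      rw [hpc', Function.update_apply] at ht
      rw [ht', hav', hb']
      by_cases hta : t = a
      · rw [if_pos hta] at ht; exact absurd ht (by decide)
      · rw [if_neg hta] at ht; exact hact t ht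
    · intro t t' htne h1 h2
      rw [hpc', Function.update_apply] at h1 h2
      rw [ht']
      by_cases hta : t = a
      · rw [if_pos hta] at h1; exact absurd h1 (by decide)
      · by_cases ht'a : t' = a
        · rw [if_pos ht'a] at h2; exact absurd h2 (by decide)
        · rw [if_neg hta] at h1; rw [if_neg ht'a] at h2
          exact hdist t t' htne h1 h2
    · intro t ht
      rw [hpc', Function.update_apply] at ht
      rw [ht', hb']
      by_cases hta : t = a
      · rw [if_pos hta] at ht; exact absurd ht (by decide)
      · rw [if_neg hta] at ht; exact hmin t ht
  -- τ₂ : 2 → 3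
  · refine ⟨by rw [hb', hav']; exact hbag, ?_, ?_, ?_⟩
    · intro t ht
      rw [hpc', Function.update_apply] at ht
      rw [ht', hav', hb']
      by_cases hta : t = a
      · rw [if_pos hta] at ht; exact absurd ht (by decide)
      · rw [if_neg hta] at ht; exact hact t ht
    · intro t t' htne h1 h2
      rw [hpc', Function.update_apply] at h1 h2
      rw [ht']
      by_cases hta : t = a
      · rw [if_pos hta] at h1; exact absurd h1 (by decide)
      · by_cases ht'a : t' = a
        · rw [if_pos ht'a] at h2; exact absurd h2 (by decide)
        · rw [if_neg hta] at h1; rw [if_neg ht'a] at h2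
          exact hdist t t' htne h1 h2
    · intro t ht
      rw [hpc', Function.update_apply] at ht
      rw [ht', hb']
      by_cases hta : t = a
      · rw [if_pos hta] at ht; exact absurd ht (by decide)
      · rw [if_neg hta] at ht; exact hmin t ht
  -- τ₃ : 3 → 4
  · have hticketne : ∀ t, (s.pc t = 4 ∨ s.pc t = 5 ∨ s.pc t = 6) → s.ticket t ≠ s.avail :=
      fun t ht => ne_of_lt (hact t ht).1
    refine ⟨?_, ?_, ?_, ?_⟩
    · intro x hx
      rw [hb'] at hx
      rw [hav']
      rcases Finset.mem_insert.mp hx with rfl | hx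
      · omega
      · have := hbag x hx; omega
    · intro t ht
      rw [hpc', Function.update_apply] at ht
      rw [ht', hav', hb', Function.update_apply]
      by_cases hta : t = a
      · rw [if_pos hta]
        exact ⟨by omega, Finset.mem_insert_self _ _⟩
      · rw [if_neg hta] at ht
        rw [if_neg hta]
        obtain ⟨h1, h2⟩ := hact t ht
        exact ⟨by omega, Finset.mem_insert_of_mem h2⟩
    · intro t t' htne h1 h2
      rw [hpc', Function.update_apply] at h1 h2
      rw [ht', Function.update_apply, Function.update_apply]
      by_cases hta : t = a
      · have ht'a : ¬ t' = a := fun h => htne (hta.trans h.symm)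
        rw [if_neg ht'a] at h2
        rw [if_pos hta, if_neg ht'a]
        exact fun heq => hticketne t' h2 heq.symm
      · rw [if_neg hta] at h1
        by_cases ht'a : t' = a
        · rw [if_neg hta, if_pos ht'a]
          exact hticketne t h1
        · rw [if_neg ht'a] at h2
          rw [if_neg hta, if_neg ht'a]
          exact hdist t t' htne h1 h2
    · intro t ht
      rw [hpc', Function.update_apply] at ht
      rw [ht', hb', Function.update_apply]
      by_cases hta : t = a
      · rw [if_pos hta] at ht; exact absurd ht (by decide)
      · rw [if_neg hta] at ht
        rw [if_neg hta]
        have hm := hmin t ht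
        have hlt : s.ticket t < s.avail := (hact t (Or.inr ht)).1
        rw [Finset.min_insert, hm]
        exact min_eq_right (WithTop.coe_le_coe.mpr hlt.le)
  -- τ₄ : 4 → 5
  · have hnone : ∀ t, t ≠ a → ¬ (s.pc t = 5 ∨ s.pc t = 6) := by
      intro t hta ht
      have heq : s.ticket t = s.ticket a :=
        WithBot.coe_inj.mp ((hmin t ht).symm.trans hg)
      exact hdist t a hta (Or.inr ht) (Or.inl hpc) heq
    refine ⟨by rw [hb', hav']; exact hbag, ?_, ?_, ?_⟩
    · intro t ht
      rw [hpc', Function.update_apply] at ht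
      rw [ht', hav', hb']
      by_cases hta : t = a
      · exact hact t (Or.inl (by rw [hta]; exact hpc))
      · rw [if_neg hta] at ht; exact hact t ht
    · intro t t' htne h1 h2
      rw [hpc', Function.update_apply] at h1 h2
      rw [ht']
      by_cases hta : t = a
      · have ht'a : ¬ t' = a := fun h => htne (hta.trans h.symm)
        rw [if_neg ht'a] at h2
        exact hdist t t' htne (Or.inl (by rw [hta]; exact hpc)) h2
      · rw [if_neg hta] at h1
        by_cases ht'a : t' = a
        · exact hdist t t' htne h1 (Or.inl (by rw [ht'a]; exact hpc))
        · rw [if_neg ht'a] at h2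
          exact hdist t t' htne h1 h2
    · intro t ht
      rw [hpc', Function.update_apply] at ht
      rw [ht', hb']
      by_cases hta : t = a
      · rw [hta]; exact hg
      · rw [if_neg hta] at ht; exact hmin t ht
  -- τ₅ : 5 → 6
  · refine ⟨by rw [hb', hav']; exact hbag, ?_, ?_, ?_⟩
    · intro t ht
      rw [hpc', Function.update_apply] at ht
      rw [ht', hav', hb']
      by_cases hta : t = a
      · exact hact t (Or.inr (Or.inl (by rw [hta]; exact hpc)))
      · rw [if_neg hta] at ht; exact hact t ht
    · intro t t' htne h1 h2
      rw [hpc', Function.update_apply] at h1 h2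
      rw [ht']
      by_cases hta : t = a
      · have ht'a : ¬ t' = a := fun h => htne (hta.trans h.symm)
        rw [if_neg ht'a] at h2
        exact hdist t t' htne (Or.inr (Or.inl (by rw [hta]; exact hpc))) h2
      · rw [if_neg hta] at h1
        by_cases ht'a : t' = a
        · exact hdist t t' htne h1 (Or.inr (Or.inl (by rw [ht'a]; exact hpc)))
        · rw [if_neg ht'a] at h2
          exact hdist t t' htne h1 h2
    · intro t ht
      rw [hpc', Function.update_apply] at ht
      rw [ht', hb']
      by_cases hta : t = a
      · exact hmin t (Or.inl (by rw [hta]; exact hpc))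
      · rw [if_neg hta] at ht; exact hmin t ht
  -- τ₆ : 6 → 7
  · refine ⟨?_, ?_, ?_, ?_⟩
    · intro x hx
      rw [hb'] at hx
      rw [hav']
      exact hbag x (Finset.mem_of_mem_erase hx)
    · intro t ht
      rw [hpc', Function.update_apply] at ht
      rw [ht', hav', hb']
      by_cases hta : t = a
      · rw [if_pos hta] at ht; exact absurd ht (by decide)
      · rw [if_neg hta] at ht
        obtain ⟨h1, h2⟩ := hact t ht
        refine ⟨h1, Finset.mem_erase.mpr ⟨?_, h2⟩⟩
        exact hdist t a hta ht (Or.inr (Or.inr hpc))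
    · intro t t' htne h1 h2
      rw [hpc', Function.update_apply] at h1 h2
      rw [ht']
      by_cases hta : t = a
      · rw [if_pos hta] at h1; exact absurd h1 (by decide)
      · by_cases ht'a : t' = a
        · rw [if_pos ht'a] at h2; exact absurd h2 (by decide)
        · rw [if_neg hta] at h1; rw [if_neg ht'a] at h2
          exact hdist t t' htne h1 h2
    · intro t ht
      rw [hpc', Function.update_apply] at ht
      by_cases hta : t = a
      · rw [if_pos hta] at ht; exact absurd ht (by decide)
      · rw [if_neg hta] at ht
        exact absurd ⟨ht, Or.inr hpc⟩ (hmut t a hta)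
  -- τ₇ : 7 → 1
  · refine ⟨by rw [hb', hav']; exact hbag, ?_, ?_, ?_⟩
    · intro t ht
      rw [hpc', Function.update_apply] at ht
      rw [ht', hav', hb']
      by_cases hta : t = a
      · rw [if_pos hta] at ht; exact absurd ht (by decide)
      · rw [if_neg hta] at ht; exact hact t ht
    · intro t t' htne h1 h2
      rw [hpc', Function.update_apply] at h1 h2
      rw [ht']
      by_cases hta : t = a
      · rw [if_pos hta] at h1; exact absurd h1 (by decide)
      · by_cases ht'a : t' = a
        · rw [if_pos ht'a] at h2; exact absurd h2 (by decide)
        · rw [if_neg hta] at h1; rw [if_neg ht'a] at h2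
          exact hdist t t' htne h1 h2
    · intro t ht
      rw [hpc', Function.update_apply] at ht
      rw [ht', hb']
      by_cases hta : t = a
      · rw [if_pos hta] at ht; exact absurd ht (by decide)
      · rw [if_neg hta] at ht; exact hmin t ht

theorem setTicket_mutex {T : Type*} [DecidableEq T] :
    ∀ s : SState T, SReachable s →
      ((∀ t, (s.pc t = 4 ∨ s.pc t = 5 ∨ s.pc t = 6) →
          s.ticket t < s.avail ∧ s.ticket t ∈ s.bag) ∧
       (∀ t t', t ≠ t' → (s.pc t = 4 ∨ s.pc t = 5 ∨ s.pc t = 6) →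
          (s.pc t' = 4 ∨ s.pc t' = 5 ∨ s.pc t' = 6) → s.ticket t ≠ s.ticket t') ∧
       (∀ t, (s.pc t = 5 ∨ s.pc t = 6) → s.bag.min = (s.ticket t : WithBot ℤ))) ∧
      (∀ t t', t ≠ t' →
        ¬ ((s.pc t = 5 ∨ s.pc t = 6) ∧ (s.pc t' = 5 ∨ s.pc t' = 6))) := by
  intro s ⟨s0, hinit, hreach⟩
  have hinv : SInv s := by
    induction hreach with
    | refl =>
      obtain ⟨hav, hbag, hpc, htk⟩ := hinit
      refine ⟨?_, ?_, ?_, ?_⟩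
      · intro x hx; rw [hbag] at hx; simp at hx
      · intro t ht; rw [hpc t] at ht; simp at ht
      · intro t t' _ h1 _; rw [hpc t] at h1; simp at h1
      · intro t ht; rw [hpc t] at ht; simp at ht
    | tail _ hstep ih =>
      obtain ⟨a, hs⟩ := hstep
      exact SInv_step hs ih
  obtain ⟨h1, h2, h3, h4⟩ := hinv
  exact ⟨⟨h2, h3, h4⟩, SInv_mutex ⟨h1, h2, h3, h4⟩⟩
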